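/- Let (X, μ) be a probability space, let φ : X → ℝ be bounded measurable with S := ess sup_μ φ and A := ∫_X (−φ) dμ. Let n ≥ 1 be real, δ ∈ (n/(n+1), 1), and D, C₂ > 0, C₁ > 0 constants, and let g : X → ℝ be measurable with |g| ≤ D μ-almost everywhere. Suppose (i) ∫_X exp(δ S + (1−δ) φ + g) dμ ≤ C₁, and (ii) A ≤ n S + C₂. Then, with E := (log C₁ + D)/δ, one has A ≤ δ (n E + C₂) / ((n+1)δ − n) and S ≤ ((1−δ)/δ) · δ (n E + C₂)/((n+1)δ − n) + E; in particular both A and S are bounded by a constant depending only on n, δ, D, C₁, C₂. -/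

import Mathlib

open MeasureTheory Real

/-- Analytic mechanism of Theorem 4.1 (α-invariant > n/(n+1) case): combining the
α-invariant bound (i) with the F-functional inequality (ii) `A ≤ nS + C₂`, where
`S = ess sup φ` and `A = ∫(-φ) dμ`, yields uniform bounds on both `A` and `S`. -/
theorem stmt6 {X : Type*} [MeasurableSpace X] (μ : Measure X) [IsProbabilityMeasure μ]
    (φ : X → ℝ) (hφ : Measurable φ) (M : ℝ) (hbd : ∀ x, |φ x| ≤ M)
    (S A : ℝ) (hS : S = essSup φ μ) (hA : A = ∫ x, (-φ x) ∂μ)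
    (n : ℝ) (hn : 1 ≤ n) (δ : ℝ) (hδ : n / (n + 1) < δ) (hδ1 : δ < 1)
    (D C₂ C₁ : ℝ) (hD : 0 < D) (hC₂ : 0 < C₂) (hC₁ : 0 < C₁)
    (g : X → ℝ) (hg : Measurable g) (hgD : ∀ᵐ x ∂μ, |g x| ≤ D)
    (hi : (∫ x, Real.exp (δ * S + (1 - δ) * φ x + g x) ∂μ) ≤ C₁)
    (hii : A ≤ n * S + C₂)
    (E : ℝ) (hE : E = (Real.log C₁ + D) / δ) :
    A ≤ δ * (n * E + C₂) / ((n + 1) * δ - n) ∧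
      S ≤ (1 - δ) / δ * (δ * (n * E + C₂) / ((n + 1) * δ - n)) + E := by
  have hnpos : (0:ℝ) < n := lt_of_lt_of_le one_pos hn
  have hδ0 : 0 < δ := lt_trans (div_pos hnpos (by linarith)) hδ
  -- coefficient positivity
  have hcoef : 0 < (n + 1) * δ - n := by
    have := (div_lt_iff₀ (by linarith : (0:ℝ) < n + 1)).mp hδ
    linarith [mul_comm δ (n+1)]
  set f : X → ℝ := fun x => δ * S + (1 - δ) * φ x + g x with hf
  have hfmeas : Measurable f := by
    measurability
  have hfbd : ∀ᵐ x ∂μ, ‖f x‖ ≤ |δ * S| + (1 - δ) * M + D := by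
    filter_upwards [hgD] with x hx
    have h1 : |(1 - δ) * φ x| ≤ (1 - δ) * M := by
      rw [abs_mul, abs_of_nonneg (by linarith : (0:ℝ) ≤ 1 - δ)]
      exact mul_le_mul_of_nonneg_left (hbd x) (by linarith)
    calc ‖f x‖ ≤ |δ * S| + |(1 - δ) * φ x| + |g x| := by
          simpa [f] using (abs_add_le (δ * S + (1 - δ) * φ x) (g x)).trans (add_le_add_left (abs_add_le (δ * S) ((1 - δ) * φ x)) _)
      _ ≤ |δ * S| + (1 - δ) * M + D := by linarith
  have hfi : Integrable f μ :=
    (integrable_const _).mono' hfmeas.aestronglyMeasurable hfbd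
  have hefi : Integrable (fun x => Real.exp (f x)) μ := by
    refine (integrable_const (Real.exp (|δ * S| + (1 - δ) * M + D))).mono'
      (hfmeas.exp).aestronglyMeasurable ?_
    filter_upwards [hfbd] with x hx
    simpa [Real.norm_eq_abs, abs_of_pos (Real.exp_pos _)] using
      Real.exp_le_exp.2 (le_trans (le_abs_self _) hx)
  -- Jensen
  have hjen : Real.exp (∫ x, f x ∂μ) ≤ ∫ x, Real.exp (f x) ∂μ :=
    convexOn_exp.map_integral_le continuous_exp.continuousOn isClosed_univ
      (Filter.Eventually.of_forall fun _ => Set.mem_univ _) hfi hefi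
  have hexp : Real.exp (∫ x, f x ∂μ) ≤ C₁ := hjen.trans hi
  have hlog : ∫ x, f x ∂μ ≤ Real.log C₁ := by
    have := Real.log_le_log (Real.exp_pos _) hexp
    rwa [Real.log_exp] at this
  -- compute the integral
  have hφi : Integrable φ μ :=
    (integrable_const M).mono' hφ.aestronglyMeasurable
      (Filter.Eventually.of_forall fun x => by simpa using hbd x)
  have hgi : Integrable g μ :=
    (integrable_const D).mono' hg.aestronglyMeasurable
      (by filter_upwards [hgD] with x hx; simpa using hx)
  have hint : ∫ x, f x ∂μ = δ * S + (1 - δ) * (∫ x, φ x ∂μ) + ∫ x, g x ∂μ := by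
    have e1 : Integrable (fun x => δ * S + (1 - δ) * φ x) μ :=
      (integrable_const _).add (hφi.const_mul _)
    calc ∫ x, f x ∂μ = (∫ x, (δ * S + (1 - δ) * φ x) ∂μ) + ∫ x, g x ∂μ :=
          integral_add e1 hgi
      _ = δ * S + (1 - δ) * (∫ x, φ x ∂μ) + ∫ x, g x ∂μ := by
          rw [integral_add (integrable_const _) (hφi.const_mul _),
            integral_const, integral_const_mul]
          simp
  have hIg : -D ≤ ∫ x, g x ∂μ := by
    have : ∫ x, (-D : ℝ) ∂μ ≤ ∫ x, g x ∂μ := by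
      refine integral_mono_ae (integrable_const _) hgi ?_
      filter_upwards [hgD] with x hx
      linarith [neg_abs_le (g x), abs_nonneg (g x)]
    simpa using this
  have hIφ : ∫ x, φ x ∂μ = -A := by
    rw [hA, integral_neg]; ring
  have key : δ * S - (1 - δ) * A ≤ Real.log C₁ + D := by
    rw [hint, hIφ] at hlog
    linarith
  -- δE = log C₁ + D
  have hδE : δ * E = Real.log C₁ + D := by
    rw [hE]; field_simp
  have hSbound : δ * S ≤ (1 - δ) * A + δ * E := by linarith
  -- A bound
  have hAkey : ((n + 1) * δ - n) * A ≤ δ * (n * E + C₂) := by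
    have h1 : δ * A ≤ δ * (n * S + C₂) :=
      mul_le_mul_of_nonneg_left hii hδ0.le
    have h2 : n * (δ * S) ≤ n * ((1 - δ) * A + δ * E) :=
      mul_le_mul_of_nonneg_left hSbound hnpos.le
    nlinarith
  have hAb : A ≤ δ * (n * E + C₂) / ((n + 1) * δ - n) :=
    (le_div_iff₀ hcoef).2 (by linarith [hAkey])
  refine ⟨hAb, ?_⟩
  have h1δ : 0 ≤ 1 - δ := by linarith
  have hS2 : S ≤ (1 - δ) / δ * A + E := by
    have h : S ≤ ((1 - δ) * A + δ * E) / δ :=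
      (le_div_iff₀ hδ0).2 (by linarith [hSbound])
    calc S ≤ ((1 - δ) * A + δ * E) / δ := h
      _ = (1 - δ) / δ * A + E := by field_simp
  calc S ≤ (1 - δ) / δ * A + E := hS2
    _ ≤ (1 - δ) / δ * (δ * (n * E + C₂) / ((n + 1) * δ - n)) + E := by
        have := mul_le_mul_of_nonneg_left hAb (div_nonneg h1δ hδ0.le)
        linarith
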